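/- In the setting of the T⁽ᴶ⁾Q-formula (commutative ring R, U(v) = v − 2η, invertible Q, TQ-relation, fusion recursion, and T⁽ᴶ⁾(v) = Q(U⁻¹v)Q(Uᴶ⁻¹v)·Σ_{k=0}^{J−1} h̃(Uᵏ⁻¹v)^L Q(Uᵏ⁻¹v)⁻¹Q(Uᵏv)⁻¹ for all J ≥ 1), assume in addition the N-periodicity conditions Q(Uᴺv) = Q(v) and h̃(Uᴺv) = h̃(v) for all v, for a fixed positive integer N. Then the boundary fusion relation T⁽ᴺ⁺¹⁾(v) = T⁽ᴺ⁻¹⁾(Uv) + 2·h̃(U⁻¹v)^L holds for all v. -/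
import Mathlib


open Finset

/-- The boundary fusion relation `T⁽ᴺ⁺¹⁾(v) = T⁽ᴺ⁻¹⁾(Uv) + 2 h̃(U⁻¹v)^L` of the
root-of-unity eight-vertex model, where `U v = v - 2η`. -/
theorem eightVertex_boundary_fusion {R : Type*} [CommRing R] (η : ℂ) (L N : ℕ)
    (hN : 0 < N)
    (Q : ℂ → Rˣ) (htil T : ℂ → R) (Tf : ℕ → ℂ → R)
    (hTQ : ∀ v : ℂ, T v * (Q v : R)
      = htil v ^ L * (Q (v + 2*η) : R) + htil (v + 2*η) ^ L * (Q (v - 2*η) : R))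
    (hT0 : ∀ v : ℂ, Tf 0 v = 0)
    (hT1 : ∀ v : ℂ, Tf 1 v = htil (v + 2*η) ^ L)
    (hT2 : ∀ v : ℂ, Tf 2 v = T v)
    (hrec : ∀ J : ℕ, 1 ≤ J → ∀ v : ℂ,
      Tf J v * T (v - 2*((J : ℂ) - 1)*η)
        = htil (v - 2*(J : ℂ)*η) ^ L * Tf (J - 1) v
          + htil (v - 2*((J : ℂ) - 1)*η) ^ L * Tf (J + 1) v)
    (hfus : ∀ J : ℕ, 1 ≤ J → ∀ v : ℂ,
      Tf J v = (Q (v + 2*η) : R) * (Q (v - 2*((J : ℂ) - 1)*η) : R) *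
        ∑ k ∈ range J, htil (v - 2*((k : ℂ) - 1)*η) ^ L *
          ((Q (v - 2*((k : ℂ) - 1)*η))⁻¹ : Rˣ) * ((Q (v - 2*(k : ℂ)*η))⁻¹ : Rˣ))
    (hQper : ∀ v : ℂ, Q (v - 2*(N : ℂ)*η) = Q v)
    (hhper : ∀ v : ℂ, htil (v - 2*(N : ℂ)*η) = htil v) :
    ∀ v : ℂ, Tf (N + 1) v = Tf (N - 1) (v - 2*η) + 2 * htil (v + 2*η) ^ L := by

  intro v
  obtain ⟨M, rfl⟩ : ∃ M, N = M + 1 := ⟨N - 1, by omega⟩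
  have hQper' : ∀ w : ℂ, Q (w - 2*((M:ℂ)+1)*η) = Q w := by
    intro w; have h := hQper w; push_cast at h; exact h
  have hhper' : ∀ w : ℂ, htil (w - 2*((M:ℂ)+1)*η) = htil w := by
    intro w; have h := hhper w; push_cast at h; exact h
  have key1 : Tf (M + 1 + 1) v
      = (Q (v + 2*η) : R) * (Q v : R) *
        ∑ k ∈ range (M + 1 + 1), htil (v - 2*((k : ℂ) - 1)*η) ^ L *
          ((Q (v - 2*((k : ℂ) - 1)*η))⁻¹ : Rˣ) * ((Q (v - 2*(k : ℂ)*η))⁻¹ : Rˣ) := by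
    rw [hfus (M + 1 + 1) (by omega) v]
    have e : v - 2*(((M + 1 + 1 : ℕ) : ℂ) - 1)*η = v - 2*((M:ℂ)+1)*η := by
      push_cast; ring
    rw [e, hQper' v]
  have key2 : Tf (M + 1 - 1) (v - 2*η)
      = (Q v : R) * (Q (v + 2*η) : R) *
        ∑ k ∈ range M, htil (v - 2*(((k + 1 : ℕ) : ℂ) - 1)*η) ^ L *
          ((Q (v - 2*(((k + 1 : ℕ) : ℂ) - 1)*η))⁻¹ : Rˣ) *
          ((Q (v - 2*((k + 1 : ℕ) : ℂ)*η))⁻¹ : Rˣ) := by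
    rcases Nat.eq_zero_or_pos M with hM | hM
    · subst hM; simp [hT0]
    · have h := hfus M hM (v - 2*η)
      have e1 : v - 2*η + 2*η = v := by ring
      have e2 : v - 2*η - 2*((M:ℂ) - 1)*η = (v + 2*η) - 2*((M:ℂ)+1)*η := by ring
      rw [e1, e2, hQper' (v + 2*η)] at h
      rw [show M + 1 - 1 = M from rfl, h]
      congr 1
      refine Finset.sum_congr rfl fun k _ => ?_
      have a1 : v - 2*η - 2*((k:ℂ) - 1)*η = v - 2*(((k + 1 : ℕ) : ℂ) - 1)*η := by
        push_cast; ring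
      have a2 : v - 2*η - 2*(k:ℂ)*η = v - 2*((k + 1 : ℕ) : ℂ)*η := by
        push_cast; ring
      rw [a1, a2]
  rw [key1, key2, Finset.sum_range_succ, Finset.sum_range_succ']
  have e0a : v - 2*(((0 : ℕ) : ℂ) - 1)*η = v + 2*η := by push_cast; ring
  have e0b : v - 2*((0 : ℕ) : ℂ)*η = v := by push_cast; ring
  have eMa : v - 2*(((M + 1 : ℕ) : ℂ) - 1)*η = (v + 2*η) - 2*((M:ℂ)+1)*η := by
    push_cast; ring
  have eMb : v - 2*((M + 1 : ℕ) : ℂ)*η = v - 2*((M:ℂ)+1)*η := by push_cast; ring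
  rw [e0a, e0b, eMa, eMb, hQper' v, hQper' (v + 2*η), hhper' (v + 2*η)]
  have u1 : (Q (v + 2*η) : R) * ((Q (v + 2*η))⁻¹ : Rˣ) = 1 := Units.mul_inv _
  have u0 : (Q v : R) * ((Q v)⁻¹ : Rˣ) = 1 := Units.mul_inv _
  linear_combination (2 * htil (v + 2*η) ^ L * ((Q v)⁻¹ : Rˣ) * (Q v : R)) * u1
    + 2 * htil (v + 2*η) ^ L * u0
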